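/- Let V ⊆ ℂⁿ be open, Φ : V → ℝ continuous, Ψ̃ : V × V → ℂ continuous, C₀ > 0 and M > 0, with Re Ψ̃(y,y) = Φ(y) for all y ∈ V and 2 Re Ψ̃(x,y) ≤ Φ(x) + Φ(y) − (1/C₀)|x−y|² for all x, y ∈ V. Let b : V × V → ℂ be measurable with |b| ≤ M and define Π̃u(x) := h^{−n} ∫_V e^{(2/h)(Ψ̃(x,y) − Ψ̃(y,y))} b(x,y) u(y) dL(y). Let V₁, V₂ be open with V₁ ⋐ V₂ ⋐ V. Then there exist C > 0 and ε > 0 such that for every h ∈ (0,1] and every measurable u : V → ℂ with ‖u‖_{L²_Φ(V)} < ∞: ‖Π̃(1_{V∖V₂} u)‖_{L²_Φ(V₁)} ≤ C e^{−ε/h} ‖u‖_{L²_Φ(V)}, where 1_{V∖V₂} is the indicator function of V ∖ V₂. -/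

import Mathlib

open Complex MeasureTheory

noncomputable section

/-- `ℂⁿ` with its Euclidean (Hermitian) norm. -/
abbrev En (n : ℕ) := EuclideanSpace ℂ (Fin n)

instance (n : ℕ) : MeasurableSpace (En n) := borel _
instance (n : ℕ) : BorelSpace (En n) := ⟨rfl⟩
/-- The real inner product structure, giving Lebesgue measure (`volume`) on `ℂⁿ ≅ ℝ^{2n}`. -/
instance (n : ℕ) : InnerProductSpace ℝ (En n) := InnerProductSpace.rclikeToReal ℂ (En n)

/-- The (possibly infinite) weighted `L²` norm `‖u‖_{L²_Φ(W)}`. -/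
def wNormE (n : ℕ) (W : Set (En n)) (Φ : En n → ℝ) (h : ℝ) (u : En n → ℂ) : ENNReal :=
  (∫⁻ x in W, ENNReal.ofReal (‖u x‖ ^ 2 * Real.exp (-(2 * Φ x) / h))) ^ (1/2 : ℝ)

/-- The Bergman-type operator
`Π̃u(x) = h^{−n} ∫_V e^{(2/h)(Ψ̃(x,y) − Ψ̃(y,y))} b(x,y) u(y) dL(y)`. -/
def PiOp (n : ℕ) (V : Set (En n)) (Ψt b : En n → En n → ℂ) (h : ℝ)
    (u : En n → ℂ) (x : En n) : ℂ :=
  ((h ^ n : ℝ) : ℂ)⁻¹ *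
    ∫ y in V, Complex.exp (((2 / h : ℝ) : ℂ) * (Ψt x y - Ψt y y)) * b x y * u y

lemma pow_le_factorial_mul_exp (n : ℕ) {x : ℝ} (hx : 0 ≤ x) :
    x ^ n ≤ n.factorial * Real.exp x := by
  have h1 : x ^ n / n.factorial ≤ Real.exp x := by
    calc x ^ n / n.factorial ≤ ∑ i ∈ Finset.range (n+1), x ^ i / i.factorial := by
          refine Finset.single_le_sum (f := fun i => x ^ i / (i.factorial : ℝ)) ?_
            (Finset.self_mem_range_succ n)
          intro i _; positivity
      _ ≤ Real.exp x := Real.sum_le_exp_of_nonneg hx _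
  have h2 : (0:ℝ) < n.factorial := by exact_mod_cast n.factorial_pos
  rw [div_le_iff₀ h2] at h1
  linarith [h1]

lemma sq_rpow_half (a : ENNReal) : (a ^ 2) ^ (1/2 : ℝ) = a := by
  rw [← ENNReal.rpow_natCast a 2, ← ENNReal.rpow_mul]
  norm_num

lemma ennreal_rpow_two (a : ENNReal) : a ^ (2:ℝ) = a ^ 2 := by
  rw [← ENNReal.rpow_natCast a 2]; norm_num

lemma gauss_integrable (n : ℕ) {c : ℝ} (hc : 0 < c) :
    Integrable (fun v : En n => Real.exp (-(c * ‖v‖^2))) := by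
  have h := (GaussianFourier.integrable_cexp_neg_mul_sq_norm_add (V := En n)
    (b := (c:ℂ)) (by simpa using hc) 0 0).norm
  simp only [zero_mul, add_zero] at h
  convert h using 2 with v
  rw [Complex.norm_exp,
    show -(c:ℂ) * (‖v‖:ℂ)^2 = ((-(c*‖v‖^2):ℝ):ℂ) from by push_cast; ring, Complex.ofReal_re]

lemma gauss_lintegral_lt_top (n : ℕ) {c : ℝ} (hc : 0 < c) :
    ∫⁻ v : En n, ENNReal.ofReal (Real.exp (-(c * ‖v‖^2))) < ⊤ := by
  have h := (gauss_integrable n hc).hasFiniteIntegral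
  rw [HasFiniteIntegral] at h
  refine lt_of_eq_of_lt ?_ h
  congr 1 with v
  rw [← ofReal_norm_eq_enorm, Real.norm_of_nonneg (Real.exp_nonneg _)]

set_option maxHeartbeats 1000000 in
/-- the contribution to `Π̃u` on `V₁` of the part of `u` living outside
`V₂ ⊋ V₁` is exponentially small, `O(e^{−ε/h})`. -/
theorem statement12 (n : ℕ)
    (V : Set (En n)) (hV : IsOpen V)
    (Φ : En n → ℝ) (hΦ : ContinuousOn Φ V)
    (Ψt : En n → En n → ℂ)
    (hΨt : ContinuousOn (fun p : En n × En n => Ψt p.1 p.2) (V ×ˢ V))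
    (C₀ M : ℝ) (hC₀ : 0 < C₀) (hM : 0 < M)
    (hdiag : ∀ y ∈ V, (Ψt y y).re = Φ y)
    (hub : ∀ x ∈ V, ∀ y ∈ V, 2 * (Ψt x y).re ≤ Φ x + Φ y - (1/C₀) * ‖x - y‖ ^ 2)
    (b : En n → En n → ℂ) (hb : Measurable fun p : En n × En n => b p.1 p.2)
    (hbM : ∀ x ∈ V, ∀ y ∈ V, ‖b x y‖ ≤ M)
    (V₁ V₂ : Set (En n)) (hV₁ : IsOpen V₁) (hV₂ : IsOpen V₂)
    (hV₁c : IsCompact (closure V₁)) (hV₂c : IsCompact (closure V₂))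
    (hV₁₂ : closure V₁ ⊆ V₂) (hV₂V : closure V₂ ⊆ V) :
    ∃ C : ℝ, 0 < C ∧ ∃ ε : ℝ, 0 < ε ∧
      ∀ h ∈ Set.Ioc (0:ℝ) 1, ∀ u : En n → ℂ, Measurable u →
        wNormE n V Φ h u < ⊤ →
        wNormE n V₁ Φ h (PiOp n V Ψt b h ((V \ V₂).indicator u))
          ≤ ENNReal.ofReal (C * Real.exp (-ε / h)) * wNormE n V Φ h u := by
  have hV₁V₂ : V₁ ⊆ V₂ := fun x hx => hV₁₂ (subset_closure hx)
  have hV₁V : V₁ ⊆ V := fun x hx => hV₂V (subset_closure (hV₁V₂ hx))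
  obtain ⟨δ, hδ, hthick⟩ := hV₁c.exists_thickening_subset_open hV₂ hV₁₂
  have hsep : ∀ x ∈ V₁, ∀ y, y ∉ V₂ → δ ≤ ‖x - y‖ := by
    intro x hx y hy
    by_contra hlt
    push_neg at hlt
    exact hy (hthick (Metric.mem_thickening_iff.mpr ⟨x, subset_closure hx, by
      rwa [dist_eq_norm, norm_sub_rev]⟩))
  set ε : ℝ := δ^2 / (4*C₀) with hε_def
  have hε : 0 < ε := by positivity
  set CK : ℝ := (n.factorial : ℝ) * (ε⁻¹)^n with hCK_def
  have hCK : 0 < CK := by positivity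
  set I₀ : ENNReal := ∫⁻ v : En n, ENNReal.ofReal (Real.exp (-(1/C₀ * ‖v‖^2))) with hI₀_def
  have hI₀ : I₀ < ⊤ := gauss_lintegral_lt_top n (by positivity)
  set W : ENNReal := (volume (closure V₁)) ^ (1/2:ℝ) * I₀ ^ (1/2:ℝ) with hW_def
  have hWne : W ≠ ⊤ := by
    apply ENNReal.mul_ne_top
    · exact (ENNReal.rpow_lt_top_of_nonneg (by norm_num) hV₁c.measure_lt_top.ne).ne
    · exact (ENNReal.rpow_lt_top_of_nonneg (by norm_num) hI₀.ne).ne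
  set c₁ : ℝ := W.toReal with hc₁_def
  have hc₁ : 0 ≤ c₁ := ENNReal.toReal_nonneg
  have hW : W ≤ ENNReal.ofReal (c₁ + 1) := by
    rw [← ENNReal.ofReal_toReal hWne]; exact ENNReal.ofReal_le_ofReal (by linarith)
  refine ⟨(c₁ + 1) * M * CK, mul_pos (mul_pos (by linarith) hM) hCK, ε, hε, ?_⟩
  rintro h ⟨hh0, hh1⟩ u hu _
  have hn0 : (0:ℝ) < h ^ n := pow_pos hh0 n
  -- the weighted L² function on the right
  set G : En n → ENNReal := fun y => ENNReal.ofReal (‖u y‖ * Real.exp (-(Φ y) / h)) with hG_def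
  have hGsq : ∀ y, G y ^ 2 = ENNReal.ofReal (‖u y‖ ^ 2 * Real.exp (-(2 * Φ y) / h)) := by
    intro y
    have he : Real.exp (-(Φ y)/h) * Real.exp (-(Φ y)/h) = Real.exp (-(2*Φ y)/h) := by
      rw [← Real.exp_add]; congr 1; ring
    rw [hG_def, sq, ← ENNReal.ofReal_mul (by positivity)]
    congr 1
    rw [← he]; ring
  have hGN : (∫⁻ y in V, G y ^ 2) ^ (1/2:ℝ) = wNormE n V Φ h u := by
    simp only [wNormE]
    congr 1
    exact lintegral_congr fun y => hGsq y
  have hΦm : AEMeasurable Φ (volume.restrict V) := hΦ.aemeasurable hV.measurableSet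
  have hGm : AEMeasurable G (volume.restrict V) :=
    ENNReal.measurable_ofReal.comp_aemeasurable
      ((hu.norm.aemeasurable).mul
        (Real.measurable_exp.comp_aemeasurable (hΦm.neg.div_const h)))
  -- key pointwise bound on V₁
  have key : ∀ x ∈ V₁,
      ENNReal.ofReal (‖PiOp n V Ψt b h ((V \ V₂).indicator u) x‖ * Real.exp (-(Φ x) / h))
        ≤ ENNReal.ofReal ((h^n)⁻¹ * M * Real.exp (-(δ^2 / (2*(C₀*h)))))
            * (I₀ ^ (1/2:ℝ) * wNormE n V Φ h u) := by
    intro x hx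
    have hxV : x ∈ V := hV₁V hx
    set F : En n → ENNReal := fun y => (V \ V₂).indicator
        (fun y' => ENNReal.ofReal (M * Real.exp (Φ x / h)
          * Real.exp (-(1/(C₀*h) * ‖x - y'‖^2)))) y with hF_def
    have hFm : Measurable F := by
      refine Measurable.indicator ?_ (hV.measurableSet.diff hV₂.measurableSet)
      refine ENNReal.measurable_ofReal.comp (Continuous.measurable ?_)
      exact continuous_const.mul (Real.continuous_exp.comp
        ((continuous_const.mul ((continuous_const.sub continuous_id).norm.pow 2)).neg))
    -- Step A : pointwise bound of the integrand
    have stepA : ∀ y ∈ V,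
        ENNReal.ofReal ‖Complex.exp (((2 / h : ℝ) : ℂ) * (Ψt x y - Ψt y y)) * b x y
            * (V \ V₂).indicator u y‖ ≤ F y * G y := by
      intro y hyV
      by_cases hy : y ∈ V \ V₂
      · rw [Set.indicator_of_mem hy]
        have h1 : ‖Complex.exp (((2/h:ℝ):ℂ) * (Ψt x y - Ψt y y))‖
            = Real.exp ((2/h) * ((Ψt x y).re - (Ψt y y).re)) := by
          rw [Complex.norm_exp]
          congr 1
          simp [Complex.mul_re]
        have hRe : (2/h) * ((Ψt x y).re - (Ψt y y).re)
            ≤ (Φ x - Φ y - (1/C₀) * ‖x - y‖^2)/h := by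
          rw [hdiag y hyV, div_mul_eq_mul_div]
          apply div_le_div_of_nonneg_right ?_ hh0.le
          · linarith [hub x hxV y hyV]
        have h3 : Real.exp ((Φ x - Φ y - (1/C₀) * ‖x - y‖^2)/h)
            = Real.exp (Φ x / h) * Real.exp (-(1/(C₀*h) * ‖x - y‖^2))
              * Real.exp (-(Φ y)/h) := by
          rw [← Real.exp_add, ← Real.exp_add]
          congr 1
          field_simp
          ring
        rw [hF_def, hG_def]
        simp only [Set.indicator_of_mem hy]
        rw [← ENNReal.ofReal_mul (by positivity)]
        apply ENNReal.ofReal_le_ofReal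
        rw [norm_mul, norm_mul, h1]
        calc Real.exp ((2/h) * ((Ψt x y).re - (Ψt y y).re)) * ‖b x y‖ * ‖u y‖
            ≤ Real.exp ((Φ x - Φ y - (1/C₀) * ‖x - y‖^2)/h) * M * ‖u y‖ := by
              have e1 := Real.exp_le_exp.mpr hRe
              have e2 := hbM x hxV y hyV
              have hbn : (0:ℝ) ≤ ‖b x y‖ := norm_nonneg _
              have hun : (0:ℝ) ≤ ‖u y‖ := norm_nonneg _
              apply mul_le_mul_of_nonneg_right _ hun
              apply mul_le_mul e1 e2 hbn (Real.exp_nonneg _)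
          _ = M * Real.exp (Φ x / h) * Real.exp (-(1/(C₀*h) * ‖x - y‖^2))
                * (‖u y‖ * Real.exp (-(Φ y)/h)) := by rw [h3]; ring
      · rw [Set.indicator_of_notMem hy]
        simp
    -- Step B : Cauchy-Schwarz
    have hCS := ENNReal.lintegral_mul_le_Lp_mul_Lq (volume.restrict V)
      (⟨by norm_num, by norm_num, by norm_num⟩ : Real.HolderConjugate 2 2)
      (hFm.aemeasurable : AEMeasurable F (volume.restrict V)) hGm
    have hT : (∫⁻ y in V, ENNReal.ofReal
          ‖Complex.exp (((2 / h : ℝ) : ℂ) * (Ψt x y - Ψt y y)) * b x y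
            * (V \ V₂).indicator u y‖)
        ≤ (∫⁻ y in V, F y ^ 2) ^ (1/2:ℝ) * (∫⁻ y in V, G y ^ 2) ^ (1/2:ℝ) := by
      calc (∫⁻ y in V, ENNReal.ofReal
            ‖Complex.exp (((2 / h : ℝ) : ℂ) * (Ψt x y - Ψt y y)) * b x y
              * (V \ V₂).indicator u y‖)
          ≤ ∫⁻ y in V, F y * G y :=
            setLIntegral_mono_ae ((hFm.aemeasurable : AEMeasurable F _).mul hGm)
              (ae_of_all _ stepA)
        _ ≤ (∫⁻ y in V, F y ^ (2:ℝ)) ^ (1/2:ℝ) * (∫⁻ y in V, G y ^ (2:ℝ)) ^ (1/2:ℝ) := by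
            simpa [Pi.mul_apply] using hCS
        _ = (∫⁻ y in V, F y ^ 2) ^ (1/2:ℝ) * (∫⁻ y in V, G y ^ 2) ^ (1/2:ℝ) := by
            simp [ennreal_rpow_two]
    -- Step C : Gaussian bound of the F-factor
    set E : ENNReal := ENNReal.ofReal (M * Real.exp (Φ x / h)
        * Real.exp (-(δ^2 / (2*(C₀*h))))) with hE_def
    have hptF : ∀ y, F y ^ 2
        ≤ E^2 * ENNReal.ofReal (Real.exp (-(1/C₀ * ‖x - y‖^2))) := by
      intro y
      by_cases hy : y ∈ V \ V₂
      · rw [hF_def, hE_def]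
        simp only [Set.indicator_of_mem hy]
        rw [← ENNReal.ofReal_pow (by positivity), ← ENNReal.ofReal_pow (by positivity),
          ← ENNReal.ofReal_mul (by positivity)]
        apply ENNReal.ofReal_le_ofReal
        have hs : δ^2 ≤ ‖x - y‖^2 := by
          have := hsep x hx y hy.2
          nlinarith [norm_nonneg (x - y)]
        have hexp : Real.exp (-(1/(C₀*h) * ‖x-y‖^2)) * Real.exp (-(1/(C₀*h) * ‖x-y‖^2))
            ≤ (Real.exp (-(δ^2 / (2*(C₀*h)))) * Real.exp (-(δ^2 / (2*(C₀*h)))))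
              * Real.exp (-(1/C₀ * ‖x-y‖^2)) := by
          rw [← Real.exp_add, ← Real.exp_add, ← Real.exp_add]
          apply Real.exp_le_exp.mpr
          have hP : (0:ℝ) < 1/(C₀*h) := by positivity
          have e1 : (1/(C₀*h)) * δ^2 ≤ (1/(C₀*h)) * ‖x-y‖^2 :=
            mul_le_mul_of_nonneg_left hs hP.le
          have e2 : (1/C₀) ≤ 1/(C₀*h) := by
            apply one_div_le_one_div_of_le (by positivity)
            nlinarith
          have e3 : (1/C₀) * ‖x-y‖^2 ≤ (1/(C₀*h)) * ‖x-y‖^2 :=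
            mul_le_mul_of_nonneg_right e2 (by positivity)
          have e4 : -(δ^2 / (2*(C₀*h))) + -(δ^2 / (2*(C₀*h))) = -((1/(C₀*h)) * δ^2) := by
            field_simp
            ring
          linarith
        calc (M * Real.exp (Φ x / h) * Real.exp (-(1/(C₀*h) * ‖x - y‖^2)))^2
            = (M * Real.exp (Φ x / h))^2 * (Real.exp (-(1/(C₀*h) * ‖x - y‖^2))
                * Real.exp (-(1/(C₀*h) * ‖x - y‖^2))) := by ring
          _ ≤ (M * Real.exp (Φ x / h))^2
                * ((Real.exp (-(δ^2 / (2*(C₀*h)))) * Real.exp (-(δ^2 / (2*(C₀*h)))))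
                  * Real.exp (-(1/C₀ * ‖x-y‖^2))) :=
              mul_le_mul_of_nonneg_left hexp (by positivity)
          _ = (M * Real.exp (Φ x / h) * Real.exp (-(δ^2 / (2*(C₀*h)))))^2
                * Real.exp (-(1/C₀ * ‖x-y‖^2)) := by ring
      · rw [hF_def]
        simp only [Set.indicator_of_notMem hy]
        simp
    have hgm : Measurable fun y : En n => ENNReal.ofReal (Real.exp (-(1/C₀ * ‖x - y‖^2))) := by
      refine ENNReal.measurable_ofReal.comp (Continuous.measurable ?_)
      exact Real.continuous_exp.comp
        ((continuous_const.mul ((continuous_const.sub continuous_id).norm.pow 2)).neg)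
    have hF2 : (∫⁻ y in V, F y ^ 2) ≤ E^2 * I₀ := by
      calc (∫⁻ y in V, F y ^ 2) ≤ ∫⁻ y, F y ^ 2 := setLIntegral_le_lintegral _ _
        _ ≤ ∫⁻ y, E^2 * ENNReal.ofReal (Real.exp (-(1/C₀ * ‖x - y‖^2))) :=
            lintegral_mono hptF
        _ = E^2 * ∫⁻ y, ENNReal.ofReal (Real.exp (-(1/C₀ * ‖x - y‖^2))) :=
            lintegral_const_mul _ hgm
        _ = E^2 * I₀ := by
            congr 1
            rw [hI₀_def]
            have : ∀ y : En n, ENNReal.ofReal (Real.exp (-(1/C₀ * ‖x - y‖^2)))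
                = (fun z : En n => ENNReal.ofReal (Real.exp (-(1/C₀ * ‖z‖^2)))) (y - x) := by
              intro y; simp only [norm_sub_rev x y]
            rw [lintegral_congr this]
            exact lintegral_sub_right_eq_self
              (fun z : En n => ENNReal.ofReal (Real.exp (-(1/C₀ * ‖z‖^2)))) x
    -- assemble
    have hTfull : (∫⁻ y in V, ENNReal.ofReal
          ‖Complex.exp (((2 / h : ℝ) : ℂ) * (Ψt x y - Ψt y y)) * b x y
            * (V \ V₂).indicator u y‖)
        ≤ E * (I₀ ^ (1/2:ℝ) * wNormE n V Φ h u) := by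
      refine hT.trans ?_
      rw [← hGN, ← mul_assoc]
      apply mul_le_mul_left
      calc (∫⁻ y in V, F y ^ 2) ^ (1/2:ℝ) ≤ (E^2 * I₀) ^ (1/2:ℝ) :=
            ENNReal.rpow_le_rpow hF2 (by norm_num)
        _ = E * I₀ ^ (1/2:ℝ) := by
            rw [ENNReal.mul_rpow_of_nonneg _ _ (by norm_num), sq_rpow_half]
    have hnorm : ‖PiOp n V Ψt b h ((V \ V₂).indicator u) x‖
        ≤ (h^n)⁻¹ * (∫⁻ y in V, ENNReal.ofReal
          ‖Complex.exp (((2 / h : ℝ) : ℂ) * (Ψt x y - Ψt y y)) * b x y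
            * (V \ V₂).indicator u y‖).toReal := by
      rw [PiOp, norm_mul]
      have h4 : ‖(((h^n : ℝ)):ℂ)⁻¹‖ = (h^n)⁻¹ := by
        rw [norm_inv, Complex.norm_real, Real.norm_eq_abs, abs_of_pos hn0]
      rw [h4]
      exact mul_le_mul_of_nonneg_left (norm_integral_le_lintegral_norm _) (by positivity)
    set T : ENNReal := (∫⁻ y in V, ENNReal.ofReal
          ‖Complex.exp (((2 / h : ℝ) : ℂ) * (Ψt x y - Ψt y y)) * b x y
            * (V \ V₂).indicator u y‖) with hT_def
    have hexp1 : Real.exp (-(Φ x)/h) * Real.exp (Φ x/h) = 1 := by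
      rw [← Real.exp_add]
      rw [show -(Φ x)/h + Φ x/h = 0 from by ring, Real.exp_zero]
    calc ENNReal.ofReal (‖PiOp n V Ψt b h ((V \ V₂).indicator u) x‖ * Real.exp (-(Φ x) / h))
        ≤ ENNReal.ofReal (((h^n)⁻¹ * Real.exp (-(Φ x) / h)) * T.toReal) := by
          apply ENNReal.ofReal_le_ofReal
          calc ‖PiOp n V Ψt b h ((V \ V₂).indicator u) x‖ * Real.exp (-(Φ x) / h)
              ≤ ((h^n)⁻¹ * T.toReal) * Real.exp (-(Φ x) / h) :=
                mul_le_mul_of_nonneg_right hnorm (Real.exp_nonneg _)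
            _ = ((h^n)⁻¹ * Real.exp (-(Φ x) / h)) * T.toReal := by ring
      _ = ENNReal.ofReal ((h^n)⁻¹ * Real.exp (-(Φ x) / h)) * ENNReal.ofReal T.toReal :=
          ENNReal.ofReal_mul (by positivity)
      _ ≤ ENNReal.ofReal ((h^n)⁻¹ * Real.exp (-(Φ x) / h)) * T :=
          mul_le_mul_right ENNReal.ofReal_toReal_le _
      _ ≤ ENNReal.ofReal ((h^n)⁻¹ * Real.exp (-(Φ x) / h))
            * (E * (I₀ ^ (1/2:ℝ) * wNormE n V Φ h u)) := mul_le_mul_right hTfull _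
      _ = (ENNReal.ofReal ((h^n)⁻¹ * Real.exp (-(Φ x) / h)) * E)
            * (I₀ ^ (1/2:ℝ) * wNormE n V Φ h u) := by ring
      _ = ENNReal.ofReal ((h^n)⁻¹ * M * Real.exp (-(δ^2 / (2*(C₀*h)))))
            * (I₀ ^ (1/2:ℝ) * wNormE n V Φ h u) := by
          congr 1
          rw [hE_def, ← ENNReal.ofReal_mul (by positivity)]
          congr 1
          linear_combination ((h^n)⁻¹ * M * Real.exp (-(δ^2 / (2*(C₀*h))))) * hexp1
  -- integrate the key bound over V₁
  set B : ENNReal := ENNReal.ofReal ((h^n)⁻¹ * M * Real.exp (-(δ^2 / (2*(C₀*h)))))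
      * (I₀ ^ (1/2:ℝ) * wNormE n V Φ h u) with hB_def
  have hsq : ∀ x ∈ V₁,
      ENNReal.ofReal (‖PiOp n V Ψt b h ((V \ V₂).indicator u) x‖ ^ 2
        * Real.exp (-(2 * Φ x) / h)) ≤ B^2 := by
    intro x hx
    have he : Real.exp (-(Φ x)/h) * Real.exp (-(Φ x)/h) = Real.exp (-(2*Φ x)/h) := by
      rw [← Real.exp_add]; congr 1; ring
    have heq : ENNReal.ofReal (‖PiOp n V Ψt b h ((V \ V₂).indicator u) x‖ ^ 2
        * Real.exp (-(2 * Φ x) / h))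
        = (ENNReal.ofReal (‖PiOp n V Ψt b h ((V \ V₂).indicator u) x‖
            * Real.exp (-(Φ x) / h)))^2 := by
      rw [← ENNReal.ofReal_pow (by positivity)]
      congr 1
      rw [← he]; ring
    rw [heq]
    exact pow_le_pow_left' (key x hx) 2
  have hmain : wNormE n V₁ Φ h (PiOp n V Ψt b h ((V \ V₂).indicator u))
      ≤ B * (volume (closure V₁)) ^ (1/2:ℝ) := by
    rw [wNormE]
    calc (∫⁻ x in V₁, ENNReal.ofReal (‖PiOp n V Ψt b h ((V \ V₂).indicator u) x‖ ^ 2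
          * Real.exp (-(2 * Φ x) / h))) ^ (1/2:ℝ)
        ≤ (∫⁻ _x in V₁, B^2) ^ (1/2:ℝ) := by
          apply ENNReal.rpow_le_rpow _ (by norm_num)
          exact setLIntegral_mono_ae aemeasurable_const (ae_of_all _ hsq)
      _ = (B^2 * volume V₁) ^ (1/2:ℝ) := by rw [setLIntegral_const]
      _ ≤ (B^2 * volume (closure V₁)) ^ (1/2:ℝ) := by
          apply ENNReal.rpow_le_rpow _ (by norm_num)
          exact mul_le_mul_right (measure_mono subset_closure) _
      _ = B * (volume (closure V₁)) ^ (1/2:ℝ) := by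
          rw [ENNReal.mul_rpow_of_nonneg _ _ (by norm_num), sq_rpow_half]
  refine hmain.trans ?_
  -- final constant bookkeeping
  have hreal : (h^n)⁻¹ * M * Real.exp (-(δ^2 / (2*(C₀*h)))) ≤ M * CK * Real.exp (-ε / h) := by
    have hp := pow_le_factorial_mul_exp n (x := ε/h) (by positivity)
    have hinv : (h ^ n)⁻¹ = (ε/h)^n * (ε⁻¹)^n := by
      rw [← inv_pow, ← mul_pow]
      congr 1
      field_simp
    have hee : Real.exp (ε/h) * Real.exp (-(δ^2 / (2*(C₀*h)))) = Real.exp (-ε / h) := by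
      rw [← Real.exp_add]
      congr 1
      rw [hε_def]
      field_simp
      ring
    calc (h^n)⁻¹ * M * Real.exp (-(δ^2 / (2*(C₀*h))))
        = M * ((ε/h)^n * (ε⁻¹)^n) * Real.exp (-(δ^2 / (2*(C₀*h)))) := by rw [hinv]; ring
      _ ≤ M * (((n.factorial:ℝ) * Real.exp (ε/h)) * (ε⁻¹)^n)
            * Real.exp (-(δ^2 / (2*(C₀*h)))) := by
          apply mul_le_mul_of_nonneg_right _ (Real.exp_nonneg _)
          apply mul_le_mul_of_nonneg_left _ hM.le
          exact mul_le_mul_of_nonneg_right hp (by positivity)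
      _ = M * CK * (Real.exp (ε/h) * Real.exp (-(δ^2 / (2*(C₀*h))))) := by
          rw [hCK_def]; ring
      _ = M * CK * Real.exp (-ε / h) := by rw [hee]
  calc B * (volume (closure V₁)) ^ (1/2:ℝ)
      = W * (ENNReal.ofReal ((h^n)⁻¹ * M * Real.exp (-(δ^2 / (2*(C₀*h)))))
          * wNormE n V Φ h u) := by rw [hB_def, hW_def]; ring
    _ ≤ ENNReal.ofReal (c₁ + 1) * (ENNReal.ofReal (M * CK * Real.exp (-ε / h))
          * wNormE n V Φ h u) := by
        apply mul_le_mul' hW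
        exact mul_le_mul_left (ENNReal.ofReal_le_ofReal hreal) _
    _ = ENNReal.ofReal ((c₁ + 1) * M * CK * Real.exp (-ε / h)) * wNormE n V Φ h u := by
        rw [← mul_assoc, ← ENNReal.ofReal_mul (by linarith)]
        congr 2
        ring

end
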